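/- For every N ≥ 2, the concatenation rev(f_2)·rev(f_3)⋯rev(f_N) of the reversals of the finite Fibonacci words is a prefix of the Fibonacci infinite word f. In other words, f = ∏_{n≥2} rev(f_n). -/
import Mathlib


/-- The finite Fibonacci words over the alphabet {0,1}: f 1 = 1, f 2 = 0,
and f n = f (n-1) ++ f (n-2) for n ≥ 3. -/
def fibWord : ℕ → List ℕ
  | 0 => []
  | 1 => [1]
  | 2 => [0]
  | n + 3 => fibWord (n + 2) ++ fibWord (n + 1)

/-- A finite word is a prefix of the Fibonacci infinite word iff it is a
prefix of some finite Fibonacci word f m with m ≥ 2. -/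
def IsFibPrefix (x : List ℕ) : Prop := ∃ m, 2 ≤ m ∧ x <+: fibWord m

/-- The "tail" word: [0,1] for odd n, [1,0] for even n. -/
def fibTail (n : ℕ) : List ℕ := if n % 2 = 1 then [0, 1] else [1, 0]

lemma fibTail_add_two (n : ℕ) : fibTail (n + 2) = fibTail n := by
  simp [fibTail, Nat.add_mod_right]

/-- Near-commutation: f (n+3) and fibWord (n+1) ++ fibWord (n+2) share everything
but the last two letters. -/
lemma fibComm (n : ℕ) : ∃ c, fibWord (n + 3) = c ++ fibTail (n + 3) ∧
    fibWord (n + 1) ++ fibWord (n + 2) = c ++ fibTail (n + 2) := by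
  induction n with
  | zero => exact ⟨[], by decide, by decide⟩
  | succ n ih =>
    obtain ⟨c, h1, h2⟩ := ih
    refine ⟨fibWord (n + 2) ++ c, ?_, ?_⟩
    · show fibWord (n + 3) ++ fibWord (n + 2) = fibWord (n + 2) ++ c ++ fibTail (n + 4)
      rw [show fibWord (n + 3) = fibWord (n + 2) ++ fibWord (n + 1) from rfl,
        List.append_assoc, h2, show fibTail (n + 4) = fibTail (n + 2) from fibTail_add_two (n + 2)]
      simp
    · show fibWord (n + 2) ++ fibWord (n + 3) = fibWord (n + 2) ++ c ++ fibTail (n + 3)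
      rw [h1]
      simp

/-- Decomposition: f (k+3) = p ++ fibTail (k+3) with rev (f (k+3)) = fibTail (k+4) ++ p. -/
lemma fibDecomp (k : ℕ) : ∃ p, fibWord (k + 3) = p ++ fibTail (k + 3) ∧
    (fibWord (k + 3)).reverse = fibTail (k + 4) ++ p := by
  induction k using Nat.strong_induction_on with
  | _ k ih =>
    match k with
    | 0 => exact ⟨[], by decide, by decide⟩
    | 1 => exact ⟨[0], by decide, by decide⟩
    | k + 2 =>
      obtain ⟨p1, hp1, hr1⟩ := ih k (by omega)
      obtain ⟨p2, hp2', hr2'⟩ := ih (k + 1) (by omega)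
      have hp2 : fibWord (k + 4) = p2 ++ fibTail (k + 4) := hp2'
      have hr2 : (fibWord (k + 4)).reverse = fibTail (k + 5) ++ p2 := hr2'
      obtain ⟨c, hc1', hc2'⟩ := fibComm (k + 2)
      have hc1 : fibWord (k + 5) = c ++ fibTail (k + 5) := hc1'
      have hc2 : fibWord (k + 3) ++ fibWord (k + 4) = c ++ fibTail (k + 4) := hc2'
      have e1 : p2 ++ fibTail (k + 4) ++ p1 = c := by
        rw [show fibWord (k + 5) = fibWord (k + 4) ++ fibWord (k + 3) from rfl, hp1, hp2,
          show fibTail (k + 5) = fibTail (k + 3) from fibTail_add_two (k + 3)] at hc1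
        exact List.append_cancel_right (by simpa [List.append_assoc] using hc1 :
          (p2 ++ fibTail (k + 4) ++ p1) ++ fibTail (k + 3) = c ++ fibTail (k + 3))
      have e2 : p1 ++ fibTail (k + 3) ++ p2 = c := by
        rw [hp1, hp2] at hc2
        exact List.append_cancel_right (by simpa [List.append_assoc] using hc2 :
          (p1 ++ fibTail (k + 3) ++ p2) ++ fibTail (k + 4) = c ++ fibTail (k + 4))
      have key : p1 ++ fibTail (k + 3) ++ p2 = p2 ++ fibTail (k + 4) ++ p1 := e2.trans e1.symm
      refine ⟨p2 ++ fibTail (k + 4) ++ p1, ?_, ?_⟩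
      · show fibWord (k + 4) ++ fibWord (k + 3) = p2 ++ fibTail (k + 4) ++ p1 ++ fibTail (k + 5)
        rw [hp1, hp2, show fibTail (k + 5) = fibTail (k + 3) from fibTail_add_two (k + 3)]
        simp [List.append_assoc]
      · show (fibWord (k + 4) ++ fibWord (k + 3)).reverse
            = fibTail (k + 6) ++ (p2 ++ fibTail (k + 4) ++ p1)
        rw [List.reverse_append, hr1, hr2,
          show fibTail (k + 6) = fibTail (k + 4) from fibTail_add_two (k + 4),
          show fibTail (k + 5) = fibTail (k + 3) from fibTail_add_two (k + 3), ← key]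
        simp [List.append_assoc]

lemma mainAux (K : ℕ) :
    (((List.range (K + 1)).map (fun i => (fibWord (i + 2)).reverse)).flatten) ++ fibTail (K + 2)
      = fibWord (K + 4) := by
  induction K with
  | zero => decide
  | succ K ih =>
    obtain ⟨p, hp, hr'⟩ := fibDecomp K
    have hr : (fibWord (K + 3)).reverse = fibTail (K + 4) ++ p := hr'
    rw [List.range_succ, List.map_append, List.flatten_append]
    show _ ++ ((fibWord (K + 3)).reverse ++ []) ++ fibTail (K + 3) = fibWord (K + 5)
    rw [show fibWord (K + 5) = fibWord (K + 4) ++ fibWord (K + 3) from rfl, ← ih, hr, hp,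
      show fibTail (K + 4) = fibTail (K + 2) from fibTail_add_two (K + 2)]
    simp [List.append_assoc]

theorem stmt16 (N : ℕ) (hN : 2 ≤ N) :
    IsFibPrefix (((List.range (N - 1)).map (fun i => (fibWord (i + 2)).reverse)).flatten) := by
  obtain ⟨K, rfl⟩ : ∃ K, N = K + 2 := ⟨N - 2, by omega⟩
  exact ⟨K + 4, by omega, ⟨fibTail (K + 2), by simpa using mainAux K⟩⟩
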